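/- Let z be a complex r×r matrix with singular values σ₁ ≥ ⋯ ≥ σ_r ≥ 0, and let m₁ ≥ m₂ ≥ ⋯ ≥ m_r ≥ 0 be integers. For 1 ≤ k ≤ r, let Δ_k(z) denote the leading principal k×k minor of z (determinant of the top-left k×k block). Then |Δ₁(z)^{m₁−m₂} · Δ₂(z)^{m₂−m₃} ⋯ Δ_{r−1}(z)^{m_{r−1}−m_r} · Δ_r(z)^{m_r}| ≤ σ₁^{m₁} σ₂^{m₂} ⋯ σ_r^{m_r}. -/

import Mathlib

open Matrix



variable {R : Type*} [CommRing R] {k r : ℕ}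

theorem det_mul_expand (A : Matrix (Fin k) (Fin r) R) (B : Matrix (Fin r) (Fin k) R) :
    det (A * B) = ∑ φ : Fin k → Fin r, (∏ i, A i (φ i)) * det (B.submatrix φ id) := by
  have h1 : (A * B : Matrix (Fin k) (Fin k) R) = fun i => ∑ j, A i j • B j := by
    ext i l; simp [mul_apply]
  have h2 := (detRowAlternating : (Fin k → R) [⋀^Fin k]→ₗ[R] R).toMultilinearMap.map_sum
    (α := fun _ => Fin r) (g := fun i j => A i j • B j)
  rw [show det (A * B) = detRowAlternating (A * B) from rfl, h1]
  rw [show detRowAlternating (fun i => ∑ j, A i j • B j)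
      = (detRowAlternating : (Fin k → R) [⋀^Fin k]→ₗ[R] R).toMultilinearMap
        (fun i => ∑ j : Fin r, (fun i j => A i j • B j) i j) from rfl, h2]
  refine Finset.sum_congr rfl fun φ _ => ?_
  have h3 := (detRowAlternating : (Fin k → R) [⋀^Fin k]→ₗ[R] R).toMultilinearMap.map_smul_univ
    (fun i => A i (φ i)) (fun i => B (φ i))
  exact h3

private theorem image_orderEmb_comp (t : Finset (Fin r)) (ht : t.card = k) (ρ : Equiv.Perm (Fin k)) :
    Finset.univ.image ((t.orderEmbOfFin ht) ∘ ρ) = t := by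
  have h1 : Finset.univ.image ((t.orderEmbOfFin ht) ∘ ρ)
      = (Finset.univ.image ρ).image (t.orderEmbOfFin ht) := by
    rw [Finset.image_image]
  rw [h1, Finset.image_univ_equiv]
  refine Finset.eq_of_subset_of_card_le (fun x hx => ?_) ?_
  · obtain ⟨y, -, rfl⟩ := Finset.mem_image.1 hx
    exact t.orderEmbOfFin_mem ht y
  · rw [Finset.card_image_of_injective _ (t.orderEmbOfFin ht).injective, Finset.card_univ,
      Fintype.card_fin, ht]

theorem cauchy_binet (A : Matrix (Fin k) (Fin r) R) (B : Matrix (Fin r) (Fin k) R) :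
    det (A * B) = ∑ s : {s : Finset (Fin r) // s.card = k},
      det (A.submatrix id (s.1.orderEmbOfFin s.2)) * det (B.submatrix (s.1.orderEmbOfFin s.2) id) := by
  classical
  rw [det_mul_expand]
  rw [← Finset.sum_filter_add_sum_filter_not Finset.univ (fun φ : Fin k → Fin r => Function.Injective φ)]
  have hzero : ∑ φ ∈ Finset.univ.filter (fun φ : Fin k → Fin r => ¬ Function.Injective φ),
      (∏ i, A i (φ i)) * det (B.submatrix φ id) = 0 := by
    refine Finset.sum_eq_zero fun φ hφ => ?_
    rw [Finset.mem_filter, Function.Injective] at hφ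
    push_neg at hφ
    obtain ⟨i, j, hij, hne⟩ := hφ.2
    rw [det_zero_of_row_eq hne (by ext l; simp [Matrix.submatrix, hij]), mul_zero]
  rw [hzero, add_zero]
  rw [Finset.sum_subtype (p := fun φ : Fin k → Fin r => Function.Injective φ) _ (by simp)]
  let e : {s : Finset (Fin r) // s.card = k} × Equiv.Perm (Fin k) →
      {φ : Fin k → Fin r // Function.Injective φ} := fun sp =>
    ⟨(sp.1.1.orderEmbOfFin sp.1.2) ∘ sp.2, ((sp.1.1.orderEmbOfFin sp.1.2).injective).comp sp.2.injective⟩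
  have hbij : Function.Bijective e := by
    constructor
    · rintro ⟨⟨s, hs⟩, π⟩ ⟨⟨s', hs'⟩, π'⟩ h
      simp only [e, Subtype.mk_eq_mk] at h
      have hss : s = s' := by
        rw [← image_orderEmb_comp s hs π, h, image_orderEmb_comp s' hs' π']
      subst hss
      have hπ : π = π' :=
        Equiv.ext fun i => (s.orderEmbOfFin hs).injective (congrFun h i)
      simp [hπ]
    · rintro ⟨φ, hφ⟩
      set s : Finset (Fin r) := Finset.univ.image φ with hsdef
      have hs : s.card = k := by
        rw [hsdef, Finset.card_image_of_injective _ hφ, Finset.card_univ, Fintype.card_fin]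
      have hmem : ∀ i, φ i ∈ s := fun i => Finset.mem_image_of_mem φ (Finset.mem_univ i)
      let g : Fin k → Fin k := fun i => (s.orderIsoOfFin hs).symm ⟨φ i, hmem i⟩
      have hg : Function.Injective g := by
        intro a b hab
        have h2 : (⟨φ a, hmem a⟩ : {x // x ∈ s}) = ⟨φ b, hmem b⟩ :=
          (s.orderIsoOfFin hs).symm.injective hab
        exact hφ (Subtype.mk_eq_mk.mp h2)
      let π : Equiv.Perm (Fin k) := Equiv.ofBijective g (Finite.injective_iff_bijective.mp hg)
      refine ⟨⟨⟨s, hs⟩, π⟩, ?_⟩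
      simp only [e, Subtype.mk_eq_mk]
      funext i
      show s.orderEmbOfFin hs (g i) = φ i
      have : s.orderEmbOfFin hs (g i) = ((s.orderIsoOfFin hs) (g i) : Fin r) := by
        rw [Finset.coe_orderIsoOfFin_apply]
      rw [this]
      show (((s.orderIsoOfFin hs) ((s.orderIsoOfFin hs).symm ⟨φ i, hmem i⟩)) : Fin r) = φ i
      rw [OrderIso.apply_symm_apply]
  rw [← Fintype.sum_bijective e hbij _ _ (fun _ => rfl)]
  rw [Fintype.sum_prod_type]
  refine Finset.sum_congr rfl fun ⟨s, hs⟩ _ => ?_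
  -- inner sum over permutations
  have hterm : ∀ π : Equiv.Perm (Fin k),
      (∏ i, A i ((s.orderEmbOfFin hs) (π i))) * det (B.submatrix ((s.orderEmbOfFin hs) ∘ π) id)
      = ((Equiv.Perm.sign π : ℤ) : R) * (∏ i, (A.submatrix id (s.orderEmbOfFin hs)) i (π i))
          * det (B.submatrix (s.orderEmbOfFin hs) id) := by
    intro π
    have : B.submatrix ((s.orderEmbOfFin hs) ∘ π) id
        = (B.submatrix (s.orderEmbOfFin hs) id).submatrix π id := by
      ext i j; rfl
    rw [this, det_permute]
    simp only [Matrix.submatrix_apply, id_eq]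
    push_cast
    ring
  calc ∑ π : Equiv.Perm (Fin k),
        (∏ i, A i ((s.orderEmbOfFin hs) (π i))) * det (B.submatrix ((s.orderEmbOfFin hs) ∘ π) id)
      = (∑ π : Equiv.Perm (Fin k), ((Equiv.Perm.sign π : ℤ) : R)
          * ∏ i, (A.submatrix id (s.orderEmbOfFin hs)) i (π i)) * det (B.submatrix (s.orderEmbOfFin hs) id) := by
        rw [Finset.sum_mul]
        exact Finset.sum_congr rfl fun π _ => hterm π
    _ = det (A.submatrix id (s.orderEmbOfFin hs)) * det (B.submatrix (s.orderEmbOfFin hs) id) := by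
        congr 1
        rw [← det_transpose, det_apply']
        refine Finset.sum_congr rfl fun π _ => ?_
        congr 1

theorem le_apply_of_strictMono {k r : ℕ} {f : Fin k → Fin r} (hf : StrictMono f) :
    ∀ i : Fin k, (i : ℕ) ≤ (f i : ℕ) := by
  have key : ∀ n, ∀ i : Fin k, (i : ℕ) = n → n ≤ (f i : ℕ) := by
    intro n
    induction n with
    | zero => intro i _; exact Nat.zero_le _
    | succ m ih =>
      intro i hi
      have hm : m < k := lt_of_lt_of_le (by omega) (le_of_lt i.isLt)
      have hji : (⟨m, hm⟩ : Fin k) < i := by simp only [Fin.lt_def, Fin.val_mk]; omega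
      have h1 := hf hji
      rw [Fin.lt_def] at h1
      have h2 := ih ⟨m, hm⟩ rfl
      omega
  exact fun i => key (i : ℕ) i rfl

-- antitone nonneg: product over any k-subset is at most product over first k
theorem prod_subset_le_prod_first {r k : ℕ} (hk : k ≤ r) (ν : Fin r → ℝ)
    (hmono : Antitone ν) (hnn : ∀ i, 0 ≤ ν i) (t : Finset (Fin r)) (ht : t.card = k) :
    ∏ j ∈ t, ν j ≤ ∏ i : Fin k, ν (Fin.castLE hk i) := by
  have himg : t = Finset.univ.image (t.orderEmbOfFin ht) := by
    refine (Finset.eq_of_subset_of_card_le (fun x hx => ?_) ?_).symm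
    · obtain ⟨y, -, rfl⟩ := Finset.mem_image.1 hx
      exact t.orderEmbOfFin_mem ht y
    · rw [Finset.card_image_of_injective _ (t.orderEmbOfFin ht).injective, Finset.card_univ,
        Fintype.card_fin, ht]
  rw [himg, Finset.prod_image (fun a _ b _ h => (t.orderEmbOfFin ht).injective h)]
  refine Finset.prod_le_prod (fun i _ => hnn _) (fun i _ => hmono ?_)
  rw [Fin.le_def]
  exact le_apply_of_strictMono (t.orderEmbOfFin ht).strictMono i

theorem normSq_det_leading_le {r k : ℕ} (hk : k ≤ r) (z : Matrix (Fin r) (Fin r) ℂ)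
    (ν : Fin r → ℝ) (hmono : Antitone ν) (hnn : ∀ i, 0 ≤ ν i)
    (p : Equiv.Perm (Fin r))
    (hν : ∀ i, ν i = (Matrix.isHermitian_mul_conjTranspose_self z).eigenvalues (p i)) :
    Complex.normSq (det (z.submatrix (Fin.castLE hk) (Fin.castLE hk)))
      ≤ ∏ i : Fin k, ν (Fin.castLE hk i) := by
  classical
  set g : Fin k → Fin r := Fin.castLE hk with hg
  have hginj : Function.Injective g := Fin.castLE_injective hk
  set hM := Matrix.isHermitian_mul_conjTranspose_self z with hMdef
  set μ : Fin r → ℝ := hM.eigenvalues with hμ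
  have hμnn : ∀ i, 0 ≤ μ i := Matrix.eigenvalues_self_mul_conjTranspose_nonneg z
  set V : Matrix (Fin r) (Fin r) ℂ := (hM.eigenvectorUnitary : Matrix (Fin r) (Fin r) ℂ) with hV
  set D : Matrix (Fin r) (Fin r) ℂ := diagonal (RCLike.ofReal ∘ μ) with hD
  set Z : Matrix (Fin k) (Fin r) ℂ := z.submatrix g id with hZ
  set F : Matrix (Fin k) (Fin r) ℂ := V.submatrix g id with hF
  -- submatrix-of-product helper
  have submul : ∀ (P Q : Matrix (Fin r) (Fin r) ℂ),
      (P * Q).submatrix g g = P.submatrix g id * Q.submatrix id g := by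
    intro P Q; ext i j; simp [Matrix.mul_apply]
  have hVV : V * Vᴴ = 1 := by
    rw [← Matrix.star_eq_conjTranspose]
    exact (Matrix.mem_unitaryGroup_iff).mp hM.eigenvectorUnitary.2
  have hspec : z * zᴴ = V * D * Vᴴ := by
    have hsp := hM.spectral_theorem
    rw [Unitary.conjStarAlgAut_apply, Matrix.star_eq_conjTranspose] at hsp
    exact hsp
  have hZconj : Zᴴ = zᴴ.submatrix id g := by ext i j; simp [hZ]
  have hFconj : Fᴴ = Vᴴ.submatrix id g := by ext i j; simp [hF]
  have h1 : Z * Zᴴ = F * D * Fᴴ := by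
    have e1 : Z * Zᴴ = (z * zᴴ).submatrix g g := by
      rw [hZconj, hZ, submul]
    have e2 : (V * D * Vᴴ).submatrix g g = (V * D).submatrix g id * Vᴴ.submatrix id g := submul _ _
    have e3 : (V * D).submatrix g id = F * D := by
      ext i j; simp [hD, Matrix.mul_apply, Matrix.diagonal, hF]
    rw [e1, hspec, e2, e3, hFconj]
  have h2 : F * Fᴴ = 1 := by
    have e1 : F * Fᴴ = (V * Vᴴ).submatrix g g := by rw [hFconj, hF, submul]
    rw [e1, hVV]
    ext i j
    simp [Matrix.one_apply, hginj.eq_iff]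
  -- the three Cauchy–Binet expansions
  set emb : {s : Finset (Fin r) // s.card = k} → (Fin k → Fin r) :=
    fun s => s.1.orderEmbOfFin s.2 with hemb
  set u : {s : Finset (Fin r) // s.card = k} → ℝ :=
    fun s => Complex.normSq (det (Z.submatrix id (emb s))) with hu
  set w : {s : Finset (Fin r) // s.card = k} → ℝ :=
    fun s => Complex.normSq (det (F.submatrix id (emb s))) with hw
  set P : {s : Finset (Fin r) // s.card = k} → ℝ :=
    fun s => ∏ j : Fin k, μ (emb s j) with hP
  have conj_sub : ∀ (W : Matrix (Fin k) (Fin r) ℂ) s,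
      Wᴴ.submatrix (emb s) id = (W.submatrix id (emb s))ᴴ := by
    intro W s; ext i j; simp
  have cb1 : det (Z * Zᴴ) = ((∑ s, u s : ℝ) : ℂ) := by
    rw [cauchy_binet]
    push_cast
    refine Finset.sum_congr rfl fun s _ => ?_
    rw [show Zᴴ.submatrix (s.1.orderEmbOfFin s.2) id = (Z.submatrix id (emb s))ᴴ from conj_sub Z s,
      det_conjTranspose, hu]
    simp [Complex.mul_conj, Complex.star_def]
    exact Complex.mul_conj _
  have cb2 : det (F * D * Fᴴ) = ((∑ s, P s * w s : ℝ) : ℂ) := by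
    rw [cauchy_binet]
    push_cast
    refine Finset.sum_congr rfl fun s _ => ?_
    have e4 : (F * D).submatrix id (emb s)
        = F.submatrix id (emb s) * diagonal ((RCLike.ofReal ∘ μ) ∘ (emb s)) := by
      ext i j; simp [hD, Matrix.mul_apply, Matrix.diagonal, apply_ite]
    rw [show Fᴴ.submatrix (s.1.orderEmbOfFin s.2) id = (F.submatrix id (emb s))ᴴ from
      conj_sub F s, det_conjTranspose]
    rw [show (F * D).submatrix id (s.1.orderEmbOfFin s.2)
        = F.submatrix id (emb s) * diagonal ((RCLike.ofReal ∘ μ) ∘ (emb s)) from e4]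
    rw [det_mul, det_diagonal]
    rw [show ((F.submatrix id (emb s)).det * ∏ i : Fin k, ((RCLike.ofReal ∘ μ) ∘ emb s) i) *
        star (F.submatrix id (emb s)).det
        = ((F.submatrix id (emb s)).det * star (F.submatrix id (emb s)).det)
          * ∏ i : Fin k, ((RCLike.ofReal ∘ μ) ∘ emb s) i from by ring]
    rw [Complex.star_def, Complex.mul_conj]
    simp only [hP, hw, Function.comp_apply]
    push_cast
    exact mul_comm _ _
  have key : (∑ s, u s) = ∑ s, P s * w s := by
    have := cb1.symm.trans (by rw [h1, cb2])
    exact_mod_cast this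
  have hw1 : (∑ s, w s) = 1 := by
    have hdet1 : det (F * Fᴴ) = (1 : ℂ) := by rw [h2, det_one]
    have cb3 : det (F * Fᴴ) = ((∑ s, w s : ℝ) : ℂ) := by
      rw [cauchy_binet]
      push_cast
      refine Finset.sum_congr rfl fun s _ => ?_
      rw [show Fᴴ.submatrix (s.1.orderEmbOfFin s.2) id = (F.submatrix id (emb s))ᴴ from
        conj_sub F s, det_conjTranspose, hw]
      simp [Complex.mul_conj, Complex.star_def]
      exact Complex.mul_conj _
    have : ((∑ s, w s : ℝ) : ℂ) = ((1 : ℝ) : ℂ) := by rw [← cb3, hdet1]; norm_num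
    exact_mod_cast this
  -- the distinguished subset: the first k indices
  have hs0card : (Finset.univ.image g).card = k := by
    rw [Finset.card_image_of_injective _ hginj, Finset.card_univ, Fintype.card_fin]
  set s0 : {s : Finset (Fin r) // s.card = k} := ⟨Finset.univ.image g, hs0card⟩ with hs0
  have hembs0 : emb s0 = g := by
    rw [hemb]
    exact (Finset.orderEmbOfFin_unique hs0card
      (fun x => Finset.mem_image_of_mem g (Finset.mem_univ x)) (Fin.strictMono_castLE hk)).symm
  have hstart : Complex.normSq (det (z.submatrix g g)) = u s0 := by
    simp only [hu, hembs0]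
    congr 1
  set c : ℝ := ∏ i : Fin k, ν (g i) with hc
  have hPle : ∀ s, P s ≤ c := by
    intro s
    have hμν : ∀ j, μ j = ν (p.symm j) := by
      intro j
      rw [hν (p.symm j), Equiv.apply_symm_apply]
    have hinj2 : Function.Injective (fun j => p.symm (emb s j)) :=
      p.symm.injective.comp (s.1.orderEmbOfFin s.2).injective
    have e5 : P s = ∏ x ∈ Finset.univ.image (fun j => p.symm (emb s j)), ν x := by
      rw [Finset.prod_image (fun a _ b _ h => hinj2 h), hP]
      exact Finset.prod_congr rfl fun j _ => hμν (emb s j)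
    have hcard2 : (Finset.univ.image (fun j => p.symm (emb s j))).card = k := by
      rw [Finset.card_image_of_injective _ hinj2, Finset.card_univ, Fintype.card_fin]
    rw [e5, hc]
    exact prod_subset_le_prod_first hk ν hmono hnn _ hcard2
  have hwnn : ∀ s, 0 ≤ w s := fun s => Complex.normSq_nonneg _
  have hunn : ∀ s, 0 ≤ u s := fun s => Complex.normSq_nonneg _
  calc Complex.normSq (det (z.submatrix g g)) = u s0 := hstart
    _ ≤ ∑ s, u s := Finset.single_le_sum (fun s _ => hunn s) (Finset.mem_univ s0)
    _ = ∑ s, P s * w s := key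
    _ ≤ ∑ s, c * w s := Finset.sum_le_sum fun s _ =>
        mul_le_mul_of_nonneg_right (hPle s) (hwnn s)
    _ = c := by rw [← Finset.mul_sum, hw1, mul_one]

theorem telescope_sum {r : ℕ} (m : Fin r → ℕ) (hm : Antitone m) (i : Fin r) :
    ∑ k ∈ Finset.univ.filter (fun k => i ≤ k),
      (if h : (k : ℕ) + 1 < r then m k - m ⟨(k : ℕ) + 1, h⟩ else m k) = m i := by
  have key : ∀ n, ∀ i : Fin r, r - (i : ℕ) = n →
      ∑ k ∈ Finset.univ.filter (fun k => i ≤ k),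
        (if h : (k : ℕ) + 1 < r then m k - m ⟨(k : ℕ) + 1, h⟩ else m k) = m i := by
    intro n
    induction n using Nat.strong_induction_on with
    | _ n ih =>
      intro i hi
      by_cases h : (i : ℕ) + 1 < r
      · set i' : Fin r := ⟨(i : ℕ) + 1, h⟩ with hi'
        have hfilter : Finset.univ.filter (fun k => i ≤ k)
            = insert i (Finset.univ.filter (fun k : Fin r => i' ≤ k)) := by
          ext k
          simp only [Finset.mem_filter, Finset.mem_univ, true_and, Finset.mem_insert,
            Fin.le_def, Fin.ext_iff, hi']
          omega
        have hnotmem : i ∉ Finset.univ.filter (fun k : Fin r => i' ≤ k) := by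
          simp [Fin.le_def, hi']
        rw [hfilter, Finset.sum_insert hnotmem, dif_pos h,
          ih (r - (i' : ℕ)) (by simp only [hi']; omega) i' rfl]
        exact Nat.sub_add_cancel (hm (by rw [Fin.le_def]; simp [hi']))
      · have hfilter : Finset.univ.filter (fun k => i ≤ k) = {i} := by
          ext k
          simp only [Finset.mem_filter, Finset.mem_univ, true_and, Finset.mem_singleton,
            Fin.le_def, Fin.ext_iff]
          have := k.isLt
          omega
        rw [hfilter, Finset.sum_singleton, dif_neg h]
  exact key _ i rfl


theorem highest_weight_vector_estimate {r : ℕ}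
    (z : Matrix (Fin r) (Fin r) ℂ) (σ : Fin r → ℝ)
    (hmono : Antitone σ) (hpos : ∀ i, 0 ≤ σ i)
    (hsv : ∃ p : Equiv.Perm (Fin r), ∀ i,
      σ i = Real.sqrt ((Matrix.isHermitian_mul_conjTranspose_self z).eigenvalues (p i)))
    (m : Fin r → ℕ) (hm : Antitone m) :
    ‖∏ k : Fin r,
        (z.submatrix (Fin.castLE (Nat.succ_le_of_lt k.isLt))
            (Fin.castLE (Nat.succ_le_of_lt k.isLt)) : Matrix (Fin ((k : ℕ) + 1)) (Fin ((k : ℕ) + 1)) ℂ).det ^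
          (if h : (k : ℕ) + 1 < r then m k - m ⟨(k : ℕ) + 1, h⟩ else m k)‖
      ≤ ∏ i : Fin r, σ i ^ m i := by
  classical
  obtain ⟨p, hp⟩ := hsv
  set ν : Fin r → ℝ := fun i => σ i ^ 2 with hν
  have hνmono : Antitone ν := fun a b hab => by
    exact pow_le_pow_left₀ (hpos b) (hmono hab) 2
  have hνnn : ∀ i, 0 ≤ ν i := fun i => sq_nonneg _
  have hνeig : ∀ i, ν i = (Matrix.isHermitian_mul_conjTranspose_self z).eigenvalues (p i) := by
    intro i
    rw [hν]
    simp only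
    rw [hp i, Real.sq_sqrt (Matrix.eigenvalues_self_mul_conjTranspose_nonneg z (p i))]
  -- per-k bound
  set e : Fin r → ℕ := fun k => if h : (k : ℕ) + 1 < r then m k - m ⟨(k : ℕ) + 1, h⟩ else m k with he
  set Δ : Fin r → ℂ := fun k => (z.submatrix (Fin.castLE (Nat.succ_le_of_lt k.isLt))
      (Fin.castLE (Nat.succ_le_of_lt k.isLt)) : Matrix (Fin ((k : ℕ) + 1)) (Fin ((k : ℕ) + 1)) ℂ).det
    with hΔ
  set Pk : Fin r → ℝ := fun k => ∏ i : Fin ((k : ℕ) + 1), σ (Fin.castLE (Nat.succ_le_of_lt k.isLt) i)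
    with hPk
  have hPknn : ∀ k, 0 ≤ Pk k := fun k => Finset.prod_nonneg fun i _ => hpos _
  have hbound : ∀ k, ‖Δ k‖ ≤ Pk k := by
    intro k
    have h1 := normSq_det_leading_le (Nat.succ_le_of_lt k.isLt) z ν hνmono hνnn p hνeig
    have h2 : ∏ i : Fin ((k : ℕ) + 1), ν (Fin.castLE (Nat.succ_le_of_lt k.isLt) i) = (Pk k) ^ 2 := by
      rw [hPk, hν]
      simp only
      rw [← Finset.prod_pow]
    rw [h2] at h1
    have h3 : ‖Δ k‖ ^ 2 = Complex.normSq (Δ k) := by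
      rw [Complex.sq_norm]
    have h4 : ‖Δ k‖ ^ 2 ≤ (Pk k) ^ 2 := by rw [h3]; exact h1
    exact (pow_le_pow_iff_left₀ (norm_nonneg _) (hPknn k) (by norm_num)).mp h4
  calc ‖∏ k : Fin r, Δ k ^ e k‖ = ∏ k : Fin r, ‖Δ k‖ ^ e k := by
        rw [norm_prod]
        exact Finset.prod_congr rfl fun k _ => norm_pow _ _
    _ ≤ ∏ k : Fin r, Pk k ^ e k := by
        refine Finset.prod_le_prod (fun k _ => pow_nonneg (norm_nonneg _) _)
          (fun k _ => pow_le_pow_left₀ (norm_nonneg _) (hbound k) _)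
    _ = ∏ i : Fin r, σ i ^ m i := by
        have hinner : ∀ k : Fin r, Pk k = ∏ i ∈ Finset.univ.filter (fun i : Fin r => i ≤ k), σ i := by
          intro k
          have himg : Finset.univ.filter (fun i : Fin r => i ≤ k)
              = Finset.univ.image (Fin.castLE (Nat.succ_le_of_lt k.isLt)) := by
            ext x
            simp only [Finset.mem_filter, Finset.mem_univ, true_and, Finset.mem_image, Fin.le_def]
            constructor
            · intro hx
              refine ⟨⟨(x : ℕ), by omega⟩, ?_⟩
              ext
              simp
            · rintro ⟨y, -, rfl⟩
              simp only [Fin.coe_castLE]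
              exact Nat.lt_succ_iff.mp y.isLt
          rw [himg, Finset.prod_image (fun a _ b _ hab => Fin.castLE_injective _ hab), hPk]
        simp_rw [hinner]
        rw [show (fun k : Fin r => (∏ i ∈ Finset.univ.filter (fun i : Fin r => i ≤ k), σ i) ^ e k)
            = fun k : Fin r => ∏ i ∈ Finset.univ.filter (fun i : Fin r => i ≤ k), σ i ^ e k from
          funext fun k => (Finset.prod_pow _ _ _).symm]
        rw [Finset.prod_comm' (t' := Finset.univ)
          (s' := fun i : Fin r => Finset.univ.filter (fun k : Fin r => i ≤ k)) (by simp)]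
        refine Finset.prod_congr rfl fun i _ => ?_
        rw [Finset.prod_pow_eq_pow_sum]
        rw [telescope_sum m hm i]
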